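/- The ternary Grassmann algebra G_N on N generators is a finite-dimensional ℂ-vector space of dimension N(N+1)(N+2)/3 + 1. -/

import Mathlib

/-- The ternary commutation relations on the free `ℂ`-algebra on `N` generators:
`X a * X b * X c` is related to `j • (X b * X c * X a)`. The quotient ring
`RingQuot (ternaryRel j N)` is precisely the quotient of the free algebra by the
two-sided ideal generated by the elements `X a * X b * X c − j • (X b * X c * X a)`,
i.e. the ternary Grassmann algebra `G_N`. -/
inductive ternaryRel (j : ℂ) (N : ℕ) :
    FreeAlgebra ℂ (Fin N) → FreeAlgebra ℂ (Fin N) → Prop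
  | rel (a b c : Fin N) : ternaryRel j N
      (FreeAlgebra.ι ℂ a * FreeAlgebra.ι ℂ b * FreeAlgebra.ι ℂ c)
      (j • (FreeAlgebra.ι ℂ b * FreeAlgebra.ι ℂ c * FreeAlgebra.ι ℂ a))

namespace TernaryAux

abbrev Tri (N : ℕ) := Fin N × Fin N × Fin N

def rot {N : ℕ} (t : Tri N) : Tri N := (t.2.1, t.2.2, t.1)

lemma rot3 {N : ℕ} (t : Tri N) : rot (rot (rot t)) = t := rfl

lemma rot_inj {N : ℕ} : Function.Injective (rot (N := N)) := by
  intro a b h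
  have h2 := congrArg (fun s => rot (rot s)) h
  simpa [rot3] using h2

def key {N : ℕ} (t : Tri N) : ℕ := N * (N * (t.1 : ℕ) + t.2.1) + t.2.2

lemma key_inj {N : ℕ} : Function.Injective (key (N := N)) := by
  rintro ⟨a, b, c⟩ ⟨a', b', c'⟩ h
  have hN : 0 < N := a.pos
  simp only [key] at h
  have hc : (c : ℕ) = c' := by
    have := congrArg (· % N) h
    simpa [Nat.mul_add_mod, Nat.mod_eq_of_lt c.isLt, Nat.mod_eq_of_lt c'.isLt] using this
  have h2 : (N * (a : ℕ) + b) = N * (a' : ℕ) + b' := by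
    have := congrArg (· / N) h
    simpa [hc, Nat.mul_add_div hN, Nat.div_eq_of_lt c.isLt, Nat.div_eq_of_lt c'.isLt] using this
  have hb : (b : ℕ) = b' := by
    have := congrArg (· % N) h2
    simpa [Nat.mul_add_mod, Nat.mod_eq_of_lt b.isLt, Nat.mod_eq_of_lt b'.isLt] using this
  have ha : (a : ℕ) = a' := by
    have := congrArg (· / N) h2
    simpa [hb, Nat.mul_add_div hN, Nat.div_eq_of_lt b.isLt, Nat.div_eq_of_lt b'.isLt] using this
  simp [Fin.ext_iff, Prod.ext_iff, ha, hb, hc]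

def IsRep {N : ℕ} (t : Tri N) : Prop :=
  key t < key (rot t) ∧ key t < key (rot (rot t))

instance {N : ℕ} : DecidablePred (IsRep (N := N)) := fun _ =>
  inferInstanceAs (Decidable (_ ∧ _))

lemma not_rep_rot {N : ℕ} {t : Tri N} (h : IsRep t) : ¬ IsRep (rot t) := by
  rintro ⟨h1, h2⟩
  rw [rot3] at h2
  exact absurd h.1 (by omega)

lemma not_rep_rot2 {N : ℕ} {t : Tri N} (h : IsRep t) : ¬ IsRep (rot (rot t)) := by
  rintro ⟨h1, h2⟩
  rw [rot3] at h1
  exact absurd h.2 (by omega)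

lemma rot_fix {N : ℕ} {t : Tri N} (h : rot t = t) : ∃ a, t = (a, a, a) := by
  rcases t with ⟨a, b, c⟩
  simp only [rot, Prod.mk.injEq] at h
  exact ⟨a, by simp [Prod.ext_iff, h.1, h.2.1.symm ▸ h.1]⟩

lemma rep_or {N : ℕ} {t : Tri N} (h : rot t ≠ t) :
    IsRep t ∨ IsRep (rot t) ∨ IsRep (rot (rot t)) := by
  have d1 : key t ≠ key (rot t) := fun e => h (key_inj e).symm
  have d2 : key (rot t) ≠ key (rot (rot t)) := fun e => h (rot_inj (key_inj e)).symm
  have d3 : key (rot (rot t)) ≠ key t := fun e => by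
    have h1 := key_inj e
    have h2 := congrArg rot h1
    rw [rot3] at h2
    exact h h2.symm
  simp only [IsRep, rot3]
  omega

def cnt (N : ℕ) : ℕ := Fintype.card {t : Tri N // IsRep t}

def rotk {N : ℕ} (k : Fin 3) (t : Tri N) : Tri N :=
  if k.val = 0 then t else if k.val = 1 then rot t else rot (rot t)

def emap {N : ℕ} : Fin N ⊕ ({t : Tri N // IsRep t} × Fin 3) → Tri N
  | .inl a => (a, a, a)
  | .inr (⟨t, _⟩, k) => rotk k t

lemma rep_rot_ne {N : ℕ} {t : Tri N} (ht : IsRep t) : rot t ≠ t := by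
  intro he
  have h1 := ht.1
  rw [he] at h1
  omega

lemma rotk_ne {N : ℕ} {t : Tri N} (ht : IsRep t) (k : Fin 3) :
    rot (rotk k t) ≠ rotk k t := by
  fin_cases k <;> simp [rotk]
  · exact rep_rot_ne ht
  · exact fun e => rep_rot_ne ht (rot_inj e)
  · rw [rot3]
    intro e
    have := congrArg rot e
    rw [rot3] at this
    exact rep_rot_ne ht this

lemma emap_bij {N : ℕ} : Function.Bijective (emap (N := N)) := by
  constructor
  · rintro (a | ⟨⟨t, ht⟩, k⟩) (a' | ⟨⟨t', ht'⟩, k'⟩) h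
    · simp only [emap, Prod.mk.injEq] at h
      rw [h.1]
    · exfalso
      simp only [emap] at h
      refine rotk_ne ht' k' ?_
      rw [← h]
      rfl
    · exfalso
      simp only [emap] at h
      refine rotk_ne ht k ?_
      rw [h]
      rfl
    · fin_cases k <;> fin_cases k' <;> simp only [emap, rotk] at h <;>
        norm_num at h ⊢
      · exact h
      · exact absurd (h ▸ ht) (not_rep_rot ht')
      · exact absurd (h ▸ ht) (not_rep_rot2 ht')
      · rw [← h] at ht'; exact absurd ht' (not_rep_rot ht)
      · exact rot_inj h
      · have h2 := rot_inj h
        rw [h2] at ht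
        exact absurd ht (not_rep_rot ht')
      · rw [← h] at ht'; exact absurd ht' (not_rep_rot2 ht)
      · have h2 := rot_inj h
        rw [← h2] at ht'
        exact absurd ht' (not_rep_rot ht)
      · exact rot_inj (rot_inj h)
  · intro t
    by_cases hc : rot t = t
    · obtain ⟨a, rfl⟩ := rot_fix hc
      exact ⟨.inl a, rfl⟩
    · rcases rep_or hc with h | h | h
      · exact ⟨.inr (⟨t, h⟩, 0), by simp [emap, rotk]⟩
      · exact ⟨.inr (⟨rot t, h⟩, 2), by simp [emap, rotk, rot3]⟩
      · exact ⟨.inr (⟨rot (rot t), h⟩, 1), by simp [emap, rotk, rot3]⟩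

lemma count_eq (N : ℕ) : N + cnt N * 3 = N * (N * N) := by
  have := Fintype.card_of_bijective (emap_bij (N := N))
  simpa [cnt, Fintype.card_sum, Fintype.card_prod] using this

/-! ### The model space and representation -/

abbrev B (N : ℕ) := (Unit ⊕ Fin N) ⊕ ((Fin N × Fin N) ⊕ {t : Tri N // IsRep t})

abbrev V (N : ℕ) := B N →₀ ℂ

noncomputable def dl {N : ℕ} (β : B N) : V N := Finsupp.single β 1

noncomputable def rmap {N : ℕ} (j : ℂ) (t : Tri N) : V N :=
  if h : IsRep t then dl (.inr (.inr ⟨t, h⟩))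
  else if h : IsRep (rot t) then j • dl (.inr (.inr ⟨rot t, h⟩))
  else if h : IsRep (rot (rot t)) then (j * j) • dl (.inr (.inr ⟨rot (rot t), h⟩))
  else 0

noncomputable def tmap {N : ℕ} (j : ℂ) (a : Fin N) : B N → V N
  | .inl (.inl _) => dl (.inl (.inr a))
  | .inl (.inr b) => dl (.inr (.inl (a, b)))
  | .inr (.inl p) => rmap j (a, p.1, p.2)
  | .inr (.inr _) => 0

noncomputable def Tgen {N : ℕ} (j : ℂ) (a : Fin N) : V N →ₗ[ℂ] V N :=
  Finsupp.linearCombination ℂ (tmap j a)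

lemma Tgen_dl {N : ℕ} (j : ℂ) (a : Fin N) (β : B N) :
    Tgen j a (dl β) = tmap j a β := by
  simp [Tgen, dl]

lemma rmap_rot {N : ℕ} {j : ℂ} (hj : j ^ 3 = 1) (t : Tri N) :
    rmap j t = j • rmap j (rot t) := by
  have hjj : j * (j * j) = 1 := by
    have e : j * (j * j) = j ^ 3 := by ring
    rw [e, hj]
  by_cases h0 : IsRep t
  · simp only [rmap]; rw [rot3]
    rw [dif_pos h0, dif_neg (not_rep_rot h0), dif_neg (not_rep_rot2 h0), dif_pos h0,
      smul_smul, hjj, one_smul]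
  · by_cases h1 : IsRep (rot t)
    · simp only [rmap, rot3]
      rw [dif_neg h0, dif_pos h1, dif_pos h1]
    · by_cases h2 : IsRep (rot (rot t))
      · simp only [rmap, rot3]
        rw [dif_neg h0, dif_neg h1, dif_pos h2, dif_neg h1, dif_pos h2, smul_smul]
      · simp only [rmap]; rw [rot3]
        rw [dif_neg h0, dif_neg h1, dif_neg h2, dif_neg h1, dif_neg h2, dif_neg h0,
          smul_zero]

lemma Tgen_rmap {N : ℕ} (j : ℂ) (a : Fin N) (t : Tri N) :
    Tgen j a (rmap j t) = 0 := by
  simp only [rmap]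
  split_ifs <;> simp [Tgen_dl, tmap, map_smul]

lemma Trel {N : ℕ} {j : ℂ} (hj : j ^ 3 = 1) (a b c : Fin N) :
    (Tgen j a * Tgen j b * Tgen j c : Module.End ℂ (V N)) =
      j • (Tgen j b * Tgen j c * Tgen j a) := by
  refine Finsupp.lhom_ext fun β x => ?_
  have hs : (Finsupp.single β x : V N) = x • dl β := by
    simp [dl, Finsupp.smul_single]
  rw [hs, map_smul, map_smul]
  congr 1
  rcases β with (u | b') | (p | s)
  · simp only [Module.End.mul_apply, LinearMap.smul_apply, Tgen_dl, tmap]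
    exact rmap_rot hj (a, b, c)
  · simp [Module.End.mul_apply, Tgen_dl, tmap, Tgen_rmap]
  · simp [Module.End.mul_apply, Tgen_dl, tmap, Tgen_rmap]
  · simp [Module.End.mul_apply, Tgen_dl, tmap]

noncomputable def fA {N : ℕ} (j : ℂ) : FreeAlgebra ℂ (Fin N) →ₐ[ℂ] Module.End ℂ (V N) :=
  FreeAlgebra.lift ℂ (Tgen j)

lemma fA_rel {N : ℕ} {j : ℂ} (hj : j ^ 3 = 1) :
    ∀ ⦃x y⦄, ternaryRel j N x y → fA (N := N) j x = fA j y := by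
  rintro _ _ ⟨a, b, c⟩
  simp only [map_mul, map_smul, fA, FreeAlgebra.lift_ι_apply]
  exact Trel hj a b c

noncomputable def rho {N : ℕ} (j : ℂ) (hj : j ^ 3 = 1) :
    RingQuot (ternaryRel j N) →ₐ[ℂ] Module.End ℂ (V N) :=
  RingQuot.liftAlgHom ℂ ⟨fA j, fA_rel hj⟩

def xg {N : ℕ} (j : ℂ) (a : Fin N) : RingQuot (ternaryRel j N) :=
  RingQuot.mkAlgHom ℂ (ternaryRel j N) (FreeAlgebra.ι ℂ a)

lemma rho_xg {N : ℕ} (j : ℂ) (hj : j ^ 3 = 1) (a : Fin N) :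
    rho j hj (xg j a) = Tgen j a := by
  rw [xg, rho, RingQuot.liftAlgHom_mkAlgHom_apply]
  simp [fA]

def b0 {N : ℕ} : B N := .inl (.inl ())

noncomputable def phi {N : ℕ} (j : ℂ) (hj : j ^ 3 = 1) :
    RingQuot (ternaryRel j N) →ₗ[ℂ] V N where
  toFun q := rho j hj q (dl b0)
  map_add' x y := by simp [map_add]
  map_smul' c x := by simp [map_smul]

noncomputable def sfam {N : ℕ} (j : ℂ) : B N → RingQuot (ternaryRel j N)
  | .inl (.inl _) => 1
  | .inl (.inr a) => xg j a
  | .inr (.inl p) => xg j p.1 * xg j p.2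
  | .inr (.inr s) => xg j s.1.1 * xg j s.1.2.1 * xg j s.1.2.2

lemma phi_sfam {N : ℕ} (j : ℂ) (hj : j ^ 3 = 1) (β : B N) :
    phi j hj (sfam j β) = dl β := by
  rcases β with (u | a) | (⟨a, b⟩ | ⟨⟨a, b, c⟩, h⟩)
  · show rho j hj 1 (dl b0) = _
    rw [map_one]
    rfl
  · show rho j hj (xg j a) (dl b0) = _
    rw [rho_xg, Tgen_dl]
    rfl
  · show rho j hj (xg j a * xg j b) (dl b0) = _
    rw [map_mul, Module.End.mul_apply, rho_xg, rho_xg, Tgen_dl]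
    show Tgen j a (dl (.inl (.inr b))) = _
    rw [Tgen_dl]
    rfl
  · show rho j hj (xg j a * xg j b * xg j c) (dl b0) = _
    rw [map_mul, map_mul, Module.End.mul_apply, Module.End.mul_apply, rho_xg, rho_xg, rho_xg,
      Tgen_dl]
    show Tgen j a (Tgen j b (dl (.inl (.inr c)))) = _
    rw [Tgen_dl]
    show Tgen j a (dl (.inr (.inl (b, c)))) = _
    rw [Tgen_dl]
    show rmap j (a, b, c) = _
    simp only [rmap]
    rw [dif_pos h]


/-! ### Relations in the quotient -/

lemma xg_rel {N : ℕ} (j : ℂ) (a b c : Fin N) :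
    xg j a * xg j b * xg j c = j • (xg j b * xg j c * xg j a) := by
  have h := RingQuot.mkAlgHom_rel ℂ (ternaryRel.rel (j := j) a b c)
  simpa only [map_mul, map_smul, xg] using h

lemma jcancel {j : ℂ} (hj1 : j ≠ 1) {M : Type*} [AddCommGroup M] [Module ℂ M] {v : M}
    (h : v = j • v) : v = 0 := by
  have h2 : (1 - j) • v = 0 := by rw [sub_smul, one_smul, ← h, sub_self]
  rcases smul_eq_zero.mp h2 with h' | h'
  · exact absurd (sub_eq_zero.mp h').symm hj1
  · exact h'

lemma four_zero {N : ℕ} {j : ℂ} (hj : j ^ 3 = 1) (hj1 : j ≠ 1) (a b c d : Fin N) :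
    xg j a * xg j b * xg j c * xg j d = 0 := by
  have step : ∀ a b c d : Fin N,
      xg j a * xg j b * xg j c * xg j d = (j * j) • (xg j b * xg j a * xg j d * xg j c) := by
    intro a b c d
    calc xg j a * xg j b * xg j c * xg j d
        = (j • (xg j b * xg j c * xg j a)) * xg j d := by rw [xg_rel j a b c]
      _ = j • (xg j b * (xg j c * xg j a * xg j d)) := by
          rw [smul_mul_assoc]; simp only [mul_assoc]
      _ = j • (xg j b * (j • (xg j a * xg j d * xg j c))) := by rw [xg_rel j c a d]
      _ = (j * j) • (xg j b * xg j a * xg j d * xg j c) := by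
          rw [mul_smul_comm, smul_smul]; simp only [mul_assoc]
  have h1 := step a b c d
  rw [step b a d c, smul_smul] at h1
  have hj4 : j * j * (j * j) = j := by
    have e : j * j * (j * j) = j ^ 3 * j := by ring
    rw [e, hj, one_mul]
  rw [hj4] at h1
  exact jcancel hj1 h1

lemma cubic_mem {N : ℕ} {j : ℂ} (hj1 : j ≠ 1) (a b c : Fin N) :
    xg j a * xg j b * xg j c ∈ Submodule.span ℂ (Set.range (sfam (N := N) j)) := by
  by_cases h0 : IsRep (a, b, c)
  · exact Submodule.subset_span ⟨.inr (.inr ⟨(a, b, c), h0⟩), rfl⟩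
  by_cases h1 : IsRep (rot (a, b, c))
  · rw [xg_rel j a b c]
    exact Submodule.smul_mem _ _
      (Submodule.subset_span ⟨.inr (.inr ⟨rot (a, b, c), h1⟩), rfl⟩)
  by_cases h2 : IsRep (rot (rot (a, b, c)))
  · rw [xg_rel j a b c, xg_rel j b c a]
    exact Submodule.smul_mem _ _ (Submodule.smul_mem _ _
      (Submodule.subset_span ⟨.inr (.inr ⟨rot (rot (a, b, c)), h2⟩), rfl⟩))
  · have hne : rot (a, b, c) = (a, b, c) := by
      by_contra hne
      rcases rep_or hne with h | h | h
      · exact h0 h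
      · exact h1 h
      · exact h2 h
    obtain ⟨d, hd⟩ := rot_fix hne
    obtain ⟨ha, hb, hc⟩ : a = d ∧ b = d ∧ c = d := by
      simpa [Prod.ext_iff] using hd
    rw [ha, hb, hc, jcancel hj1 (M := RingQuot (ternaryRel j N)) (xg_rel j d d d)]
    exact Submodule.zero_mem _

lemma sfam_mul_mem {N : ℕ} {j : ℂ} (hj : j ^ 3 = 1) (hj1 : j ≠ 1) (β γ : B N) :
    sfam j β * sfam j γ ∈ Submodule.span ℂ (Set.range (sfam (N := N) j)) := by
  have z4 := four_zero (N := N) hj hj1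
  rcases β with (u | a) | (⟨a, b⟩ | ⟨⟨a, b, c⟩, hs⟩) <;>
    rcases γ with (u' | a') | (⟨a', b'⟩ | ⟨⟨a', b', c'⟩, hs'⟩) <;>
    simp only [sfam]
  · rw [one_mul]; exact Submodule.subset_span ⟨.inl (.inl u'), rfl⟩
  · rw [one_mul]; exact Submodule.subset_span ⟨.inl (.inr a'), rfl⟩
  · rw [one_mul]; exact Submodule.subset_span ⟨.inr (.inl (a', b')), rfl⟩
  · rw [one_mul]; exact Submodule.subset_span ⟨.inr (.inr ⟨(a', b', c'), hs'⟩), rfl⟩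
  · rw [mul_one]; exact Submodule.subset_span ⟨.inl (.inr a), rfl⟩
  · exact Submodule.subset_span ⟨.inr (.inl (a, a')), rfl⟩
  · rw [← mul_assoc]; exact cubic_mem hj1 a a' b'
  · simp only [← mul_assoc]; rw [z4]; simp
  · rw [mul_one]; exact Submodule.subset_span ⟨.inr (.inl (a, b)), rfl⟩
  · exact cubic_mem hj1 a b a'
  · simp only [← mul_assoc]; rw [z4]; simp
  · simp only [← mul_assoc]; rw [z4]; simp
  · rw [mul_one]; exact Submodule.subset_span ⟨.inr (.inr ⟨(a, b, c), hs⟩), rfl⟩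
  · rw [z4]; simp
  · simp only [← mul_assoc]; rw [z4]; simp
  · simp only [← mul_assoc]; rw [z4]; simp

lemma span_top {N : ℕ} {j : ℂ} (hj : j ^ 3 = 1) (hj1 : j ≠ 1) :
    ⊤ ≤ Submodule.span ℂ (Set.range (sfam (N := N) j)) := by
  set W := Submodule.span ℂ (Set.range (sfam (N := N) j)) with hW
  have hmul : ∀ u v : RingQuot (ternaryRel j N), u ∈ W → v ∈ W → u * v ∈ W := by
    intro u v hu hv
    have hWW : W * W ≤ W := by
      rw [hW, Submodule.span_mul_span]
      refine Submodule.span_le.mpr ?_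
      rintro z hz
      rw [Set.mem_mul] at hz
      obtain ⟨p, ⟨β, rfl⟩, q, ⟨γ, rfl⟩, rfl⟩ := hz
      exact sfam_mul_mem hj hj1 β γ
    exact hWW (Submodule.mul_mem_mul hu hv)
  intro z _
  obtain ⟨y, rfl⟩ := RingQuot.mkAlgHom_surjective ℂ (ternaryRel j N) z
  induction y using FreeAlgebra.induction with
  | grade0 r =>
      rw [AlgHom.commutes, Algebra.algebraMap_eq_smul_one]
      exact Submodule.smul_mem _ _ (Submodule.subset_span ⟨.inl (.inl ()), rfl⟩)
  | grade1 a => exact Submodule.subset_span ⟨.inl (.inr a), rfl⟩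
  | mul x y hx hy => rw [map_mul]; exact hmul _ _ (hx Submodule.mem_top) (hy Submodule.mem_top)
  | add x y hx hy => rw [map_add]; exact Submodule.add_mem _ (hx Submodule.mem_top) (hy Submodule.mem_top)

end TernaryAux

theorem ternaryGrassmann_finrank (N : ℕ) (j : ℂ) (hj : j ^ 3 = 1) (hj1 : j ≠ 1) :
    FiniteDimensional ℂ (RingQuot (ternaryRel j N)) ∧
      Module.finrank ℂ (RingQuot (ternaryRel j N)) = N * (N + 1) * (N + 2) / 3 + 1 := by
  classical
  have hsp := TernaryAux.span_top (N := N) hj hj1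
  have hli : LinearIndependent ℂ (TernaryAux.sfam (N := N) j) := by
    refine LinearIndependent.of_comp (TernaryAux.phi j hj) ?_
    have he : (TernaryAux.phi j hj) ∘ (TernaryAux.sfam (N := N) j) =
        fun β => Finsupp.single β (1 : ℂ) := by
      funext β
      exact TernaryAux.phi_sfam j hj β
    rw [he]
    have hb := (Finsupp.basisSingleOne (ι := TernaryAux.B N) (R := ℂ)).linearIndependent
    rwa [Finsupp.coe_basisSingleOne] at hb
  let bas : Module.Basis (TernaryAux.B N) ℂ (RingQuot (ternaryRel j N)) := Module.Basis.mk hli hsp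
  have hfin : FiniteDimensional ℂ (RingQuot (ternaryRel j N)) :=
    Module.Finite.of_basis bas
  refine ⟨hfin, ?_⟩
  rw [Module.finrank_eq_card_basis bas]
  have hcard : Fintype.card (TernaryAux.B N) = N * N + N + TernaryAux.cnt N + 1 := by
    simp [Fintype.card_sum, Fintype.card_prod, TernaryAux.cnt]
    ring
  have hc := TernaryAux.count_eq N
  have h3 : N * (N + 1) * (N + 2) = 3 * (N * N + N + TernaryAux.cnt N) := by
    calc N * (N + 1) * (N + 2) = N * (N * N) + 3 * (N * N) + 2 * N := by ring
      _ = (N + TernaryAux.cnt N * 3) + 3 * (N * N) + 2 * N := by rw [hc]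
      _ = 3 * (N * N + N + TernaryAux.cnt N) := by ring
  rw [hcard, h3, Nat.mul_div_cancel_left _ (by norm_num : 0 < 3)]
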